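/- arXiv:2305.07388 — 4 statements merged into one kernel-verified Lean document; each statement's English description precedes it below -/
import Mathlib

section
/- Let H be a complex Hilbert space, A a unital C*-algebra, and (a†, a) a CAR family over H in A. Let κ be an antiunitary involution on H and U a bounded linear operator on H that is κ-antisymmetric, i.e. κ(U*(κf)) = −U f for all f. Define Ψ(f) := a(κ(U f)) + a†(f). Then the fields anticommute: Ψ(f)·Ψ(g) + Ψ(g)·Ψ(f) = 0 for all f, g ∈ H. -/
/-- Let `H` be a complex Hilbert space, `A` a unital C*-algebra, and
`(a†, a)` a CAR family over `H` in `A` (with `a f = star (a† f)`).  Let `κ` be an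
antiunitary involution on `H` and `U` a bounded linear operator on `H` that is
`κ`-antisymmetric, i.e. `κ (U* (κ f)) = −U f`.  Define `Ψ f := a (κ (U f)) + a† f`.
Then the fields anticommute: `Ψ f · Ψ g + Ψ g · Ψ f = 0` for all `f, g ∈ H`. -/
theorem fermionic_fields_anticommute
    {H A : Type*}
    [NormedAddCommGroup H] [InnerProductSpace ℂ H] [CompleteSpace H]
    [NormedRing A] [StarRing A] [CStarRing A] [NormedAlgebra ℂ A]
    [StarModule ℂ A] [CompleteSpace A]
    -- the CAR family: creation operators `ad`, annihilation operators `star ∘ ad`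
    (ad : H →ₗ[ℂ] A)
    (hCAR1 : ∀ f g : H,
      star (ad f) * ad g + ad g * star (ad f) = (inner ℂ f g : ℂ) • (1 : A))
    (hCAR2 : ∀ f g : H, ad f * ad g + ad g * ad f = 0)
    (hCAR3 : ∀ f g : H,
      star (ad f) * star (ad g) + star (ad g) * star (ad f) = 0)
    -- the antiunitary involution `κ`
    (κ : H → H)
    (hκadd : ∀ x y : H, κ (x + y) = κ x + κ y)
    (hκsmul : ∀ (c : ℂ) (x : H), κ (c • x) = (starRingEnd ℂ c) • κ x)
    (hκinv : ∀ x : H, κ (κ x) = x)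
    (hκinner : ∀ x y : H, (inner ℂ (κ x) (κ y) : ℂ) = (inner ℂ y x : ℂ))
    -- the `κ`-antisymmetric operator `U`
    (U : H →L[ℂ] H)
    (hanti : ∀ f : H, κ (ContinuousLinearMap.adjoint U (κ f)) = -(U f))
    (f g : H) :
    (star (ad (κ (U f))) + ad f) * (star (ad (κ (U g))) + ad g) +
      (star (ad (κ (U g))) + ad g) * (star (ad (κ (U f))) + ad f) = 0 := by
  have key : (inner ℂ (κ (U f)) g : ℂ) + inner ℂ (κ (U g)) f = 0 := by
    have h1 : (inner ℂ (κ (U f)) g : ℂ) = -(inner ℂ (κ (U g)) f : ℂ) := by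
      calc (inner ℂ (κ (U f)) g : ℂ)
          = inner ℂ (κ (U f)) (κ (κ g)) := by rw [hκinv]
        _ = inner ℂ (κ g) (U f) := hκinner _ _
        _ = inner ℂ (ContinuousLinearMap.adjoint U (κ g)) f := by
              rw [ContinuousLinearMap.adjoint_inner_left]
        _ = inner ℂ (κ (κ (ContinuousLinearMap.adjoint U (κ g)))) (κ (κ f)) := by
              rw [hκinv, hκinv]
        _ = inner ℂ (κ f) (κ (ContinuousLinearMap.adjoint U (κ g))) := hκinner _ _
        _ = inner ℂ (κ f) (-(U g)) := by rw [hanti]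
        _ = -inner ℂ (κ f) (U g) := by rw [inner_neg_right]
        _ = -inner ℂ (κ f) (κ (κ (U g))) := by rw [hκinv]
        _ = -inner ℂ (κ (U g)) f := by rw [hκinner]
    rw [h1]; ring
  have expand :
      (star (ad (κ (U f))) + ad f) * (star (ad (κ (U g))) + ad g) +
        (star (ad (κ (U g))) + ad g) * (star (ad (κ (U f))) + ad f)
      = (star (ad (κ (U f))) * star (ad (κ (U g)))
          + star (ad (κ (U g))) * star (ad (κ (U f))))
        + (star (ad (κ (U f))) * ad g + ad g * star (ad (κ (U f))))
        + (star (ad (κ (U g))) * ad f + ad f * star (ad (κ (U g))))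
        + (ad f * ad g + ad g * ad f) := by noncomm_ring
  rw [expand, hCAR3, hCAR1, hCAR1, hCAR2, zero_add, add_zero, ← add_smul, key, zero_smul]
end

section
/- Let H be a complex Hilbert space and let K := H ⊕ H be the Hilbert-space direct sum (with inner product ⟪(x₁,x₂),(y₁,y₂)⟫ = ⟪x₁,y₁⟫ + ⟪x₂,y₂⟫). Let A be a unital C*-algebra and (a†₂, a₂) a CAR family over K in A. Let κ be an antiunitary involution on H and let R, S be bounded selfadjoint operators on H with R∘R + S∘S = 1. Define, for f ∈ H, π†(f) := a†₂(R f, 0) + a₂(0, κ(S f)) and π(f) := a†₂(0, κ(S f)) + a₂(R f, 0). Then (π†, π) again satisfy the canonical anticommutation relations over H: π(f)π†(g) + π†(g)π(f) = ⟪f,g⟫·1, π†(f)π†(g) + π†(g)π†(f) = 0, and π(f)π(g) + π(g)π(f) = 0 for all f,g ∈ H. -/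
/-- The canonical inclusion of a pair `(x, y) ∈ H × H` into the Hilbert-space direct sum
`H ⊕ H = WithLp 2 (H × H)`. -/
noncomputable def dirSum {H : Type*} [NormedAddCommGroup H] [InnerProductSpace ℂ H]
    (x y : H) : WithLp 2 (H × H) :=
  (WithLp.equiv 2 (H × H)).symm (x, y)

private lemma AW_expand {A : Type*} [Ring A] (a b c d : A) :
    (a + b) * (c + d) + (c + d) * (a + b)
      = (a * c + c * a) + ((d * a + a * d) + ((b * c + c * b) + (b * d + d * b))) := by
  noncomm_ring

@[simp] private lemma dirSum_inner {H : Type*} [NormedAddCommGroup H]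
    [InnerProductSpace ℂ H] (x₁ x₂ y₁ y₂ : H) :
    (inner ℂ (dirSum x₁ x₂) (dirSum y₁ y₂) : ℂ) = inner ℂ x₁ y₁ + inner ℂ x₂ y₂ := rfl

/-- Let `K := H ⊕ H` be the Hilbert-space direct sum, `A` a unital
C*-algebra, and `(a†₂, a₂)` a CAR family over `K` in `A`.  Let `κ` be an antiunitary
involution on `H` and `R, S` bounded selfadjoint operators on `H` with `R² + S² = 1`.
Define `π† f := a†₂ (R f, 0) + a₂ (0, κ (S f))` and `π f := a†₂ (0, κ (S f)) + a₂ (R f, 0)`.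
Then `(π†, π)` again satisfy the canonical anticommutation relations over `H`. -/
theorem arakiWyss_is_CAR_family
    {H A : Type*}
    [NormedAddCommGroup H] [InnerProductSpace ℂ H] [CompleteSpace H]
    [NormedRing A] [StarRing A] [CStarRing A] [NormedAlgebra ℂ A]
    [StarModule ℂ A] [CompleteSpace A]
    -- the CAR family over `K = H ⊕ H`
    (ad2 : WithLp 2 (H × H) →ₗ[ℂ] A)
    (hCAR1 : ∀ x y : WithLp 2 (H × H),
      star (ad2 x) * ad2 y + ad2 y * star (ad2 x) = (inner ℂ x y : ℂ) • (1 : A))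
    (hCAR2 : ∀ x y : WithLp 2 (H × H), ad2 x * ad2 y + ad2 y * ad2 x = 0)
    (hCAR3 : ∀ x y : WithLp 2 (H × H),
      star (ad2 x) * star (ad2 y) + star (ad2 y) * star (ad2 x) = 0)
    -- the antiunitary involution `κ`
    (κ : H → H)
    (hκadd : ∀ x y : H, κ (x + y) = κ x + κ y)
    (hκsmul : ∀ (c : ℂ) (x : H), κ (c • x) = (starRingEnd ℂ c) • κ x)
    (hκinv : ∀ x : H, κ (κ x) = x)
    (hκinner : ∀ x y : H, (inner ℂ (κ x) (κ y) : ℂ) = (inner ℂ y x : ℂ))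
    -- the selfadjoint operators `R`, `S` with `R∘R + S∘S = 1`
    (R S : H →L[ℂ] H) (hR : IsSelfAdjoint R) (hS : IsSelfAdjoint S)
    (hRS : R ∘L R + S ∘L S = 1) :
    (∀ f g : H,
        (ad2 (dirSum 0 (κ (S f))) + star (ad2 (dirSum (R f) 0))) *
            (ad2 (dirSum (R g) 0) + star (ad2 (dirSum 0 (κ (S g))))) +
          (ad2 (dirSum (R g) 0) + star (ad2 (dirSum 0 (κ (S g))))) *
            (ad2 (dirSum 0 (κ (S f))) + star (ad2 (dirSum (R f) 0))) =
          (inner ℂ f g : ℂ) • (1 : A)) ∧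
    (∀ f g : H,
        (ad2 (dirSum (R f) 0) + star (ad2 (dirSum 0 (κ (S f))))) *
            (ad2 (dirSum (R g) 0) + star (ad2 (dirSum 0 (κ (S g))))) +
          (ad2 (dirSum (R g) 0) + star (ad2 (dirSum 0 (κ (S g))))) *
            (ad2 (dirSum (R f) 0) + star (ad2 (dirSum 0 (κ (S f))))) = 0) ∧
    (∀ f g : H,
        (ad2 (dirSum 0 (κ (S f))) + star (ad2 (dirSum (R f) 0))) *
            (ad2 (dirSum 0 (κ (S g))) + star (ad2 (dirSum (R g) 0))) +
          (ad2 (dirSum 0 (κ (S g))) + star (ad2 (dirSum (R g) 0))) *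
            (ad2 (dirSum 0 (κ (S f))) + star (ad2 (dirSum (R f) 0))) = 0) := by
  
  refine ⟨fun f g => ?_, fun f g => ?_, fun f g => ?_⟩
  · rw [AW_expand, hCAR2, hCAR3]
    simp only [add_zero, zero_add]
    rw [hCAR1 (dirSum 0 (κ (S g))) (dirSum 0 (κ (S f))),
      hCAR1 (dirSum (R f) 0) (dirSum (R g) 0), ← add_smul]
    congr 1
    simp only [dirSum_inner, inner_zero_left, inner_zero_right, zero_add, add_zero, hκinner]
    rw [← ContinuousLinearMap.adjoint_inner_right S, ← ContinuousLinearMap.adjoint_inner_right R,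
      hS.adjoint_eq, hR.adjoint_eq, ← inner_add_right]
    congr 1
    calc S (S g) + R (R g) = (R ∘L R + S ∘L S) g := by
          simp [ContinuousLinearMap.add_apply, add_comm]
      _ = g := by rw [hRS]; rfl
  · rw [AW_expand, hCAR2, hCAR3,
      hCAR1 (dirSum 0 (κ (S g))) (dirSum (R f) 0),
      hCAR1 (dirSum 0 (κ (S f))) (dirSum (R g) 0)]
    simp [dirSum]
  · rw [AW_expand, hCAR2, hCAR3,
      hCAR1 (dirSum (R g) 0) (dirSum 0 (κ (S f))),
      hCAR1 (dirSum (R f) 0) (dirSum 0 (κ (S g)))]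
    simp [dirSum]
end

section
/- Let H be a complex Hilbert space, κ an antiunitary involution on H, and U a unitary operator on H that is κ-antisymmetric, i.e. κ(U*(κf)) = −U f for all f. Let ρ be a bounded selfadjoint operator on H commuting with κ∘U (i.e. ρ(κ(U x)) = κ(U(ρ x)) for all x), and suppose 1 − 2ρ is invertible with bounded inverse T (so T∘(1−2ρ) = (1−2ρ)∘T = 1). Then Ũ := U∘T is again κ-antisymmetric: κ(Ũ*(κf)) = −Ũ f for all f ∈ H. -/
/-- Let `H` be a complex Hilbert space, `κ` an antiunitary involution on
`H`, and `U` a unitary operator on `H` that is `κ`-antisymmetric.  Let `ρ` be a bounded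
selfadjoint operator on `H` commuting with `κ ∘ U`, and suppose `1 − 2ρ` is invertible
with bounded inverse `T`.  Then `Ũ := U ∘ T` is again `κ`-antisymmetric:
`κ (Ũ* (κ f)) = −Ũ f` for all `f ∈ H`. -/
theorem modified_covariance_antisymmetric
    {H : Type*} [NormedAddCommGroup H] [InnerProductSpace ℂ H] [CompleteSpace H]
    -- the antiunitary involution `κ`
    (κ : H → H)
    (hκadd : ∀ x y : H, κ (x + y) = κ x + κ y)
    (hκsmul : ∀ (c : ℂ) (x : H), κ (c • x) = (starRingEnd ℂ c) • κ x)
    (hκinv : ∀ x : H, κ (κ x) = x)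
    (hκinner : ∀ x y : H, (inner ℂ (κ x) (κ y) : ℂ) = (inner ℂ y x : ℂ))
    -- the unitary, `κ`-antisymmetric operator `U`
    (U : H →L[ℂ] H)
    (hU1 : ContinuousLinearMap.adjoint U ∘L U = 1)
    (hU2 : U ∘L ContinuousLinearMap.adjoint U = 1)
    (hanti : ∀ f : H, κ (ContinuousLinearMap.adjoint U (κ f)) = -(U f))
    -- the one-particle density `ρ`, selfadjoint and commuting with `κ ∘ U`
    (ρ : H →L[ℂ] H) (hρ : IsSelfAdjoint ρ)
    (hcomm : ∀ x : H, ρ (κ (U x)) = κ (U (ρ x)))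
    -- the bounded inverse `T` of `1 − 2ρ`
    (T : H →L[ℂ] H)
    (hT1 : T ∘L ((1 : H →L[ℂ] H) - (2 : ℂ) • ρ) = 1)
    (hT2 : ((1 : H →L[ℂ] H) - (2 : ℂ) • ρ) ∘L T = 1)
    (f : H) :
    κ (ContinuousLinearMap.adjoint (U ∘L T) (κ f)) = -((U ∘L T) f) := by
  set S : H →L[ℂ] H := (1 : H →L[ℂ] H) - (2 : ℂ) • ρ with hS
  have hconj2 : (starRingEnd ℂ) (2:ℂ) = 2 := by norm_num [Complex.ext_iff]
  -- S is selfadjoint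
  have hSsa : ContinuousLinearMap.adjoint S = S := by
    have hsa : IsSelfAdjoint S := by
      rw [hS]
      exact (IsSelfAdjoint.one (H →L[ℂ] H)).sub
        (((by simp [IsSelfAdjoint] : IsSelfAdjoint (2:ℂ))).smul hρ)
    exact hsa.adjoint_eq
  -- T is selfadjoint
  have hTsa : ContinuousLinearMap.adjoint T = T := by
    have h1 : ContinuousLinearMap.adjoint T ∘L S = 1 := by
      calc ContinuousLinearMap.adjoint T ∘L S
          = ContinuousLinearMap.adjoint T ∘L ContinuousLinearMap.adjoint S := by rw [hSsa]
        _ = ContinuousLinearMap.adjoint (S ∘L T) := (ContinuousLinearMap.adjoint_comp S T).symm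
        _ = 1 := by rw [hT2, ← ContinuousLinearMap.star_eq_adjoint, star_one]
    calc ContinuousLinearMap.adjoint T
        = ContinuousLinearMap.adjoint T ∘L (S ∘L T) := by rw [hT2]; (try rfl); (try simp)
      _ = (ContinuousLinearMap.adjoint T ∘L S) ∘L T := by rw [ContinuousLinearMap.comp_assoc]
      _ = T := by rw [h1]; (try rfl); (try simp)
  -- κ(-x) = -κ x
  have hκneg : ∀ x : H, κ (-x) = -(κ x) := by
    intro x
    have := hκsmul (-1 : ℂ) x
    simpa using this
  -- S commutes with κ ∘ U
  have hScomm : ∀ x : H, S (κ (U x)) = κ (U (S x)) := by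
    intro x
    have h2 : κ (U (S x)) = κ (U x) - (2:ℂ) • κ (U (ρ x)) := by
      have hUx : U (S x) = U x - (2:ℂ) • U (ρ x) := by
        simp [hS, map_sub, map_smul]
      rw [hUx, sub_eq_add_neg, hκadd, hκneg, hκsmul, hconj2, ← sub_eq_add_neg]
    rw [h2]
    simp [hS, hcomm x, ContinuousLinearMap.sub_apply, ContinuousLinearMap.smul_apply]
  -- T commutes with κ ∘ U
  have hTcomm : ∀ x : H, T (κ (U x)) = κ (U (T x)) := by
    intro x
    have h3 : S (κ (U (T x))) = κ (U x) := by
      rw [hScomm (T x)]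
      have hSTx : S (T x) = x := by
        have := congrArg (fun g => g x) hT2
        simpa using this
      rw [hSTx]
    have h4 : T (S (κ (U (T x)))) = κ (U (T x)) := by
      have := congrArg (fun g => g (κ (U (T x)))) hT1
      simpa using this
    rw [h3] at h4
    exact h4
  -- main computation
  have hadj : ContinuousLinearMap.adjoint (U ∘L T)
      = ContinuousLinearMap.adjoint T ∘L ContinuousLinearMap.adjoint U :=
    ContinuousLinearMap.adjoint_comp U T
  rw [hadj, hTsa]
  have h5 : ContinuousLinearMap.adjoint U (κ f) = -(κ (U f)) := by
    have h := congrArg κ (hanti f)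
    rw [hκinv] at h
    rw [h, hκneg]
  simp only [ContinuousLinearMap.comp_apply, h5, map_neg]
  rw [hκneg, hTcomm f, hκinv]
end

section
/- Let H be a complex Hilbert space and ι a nonempty directed preorder. Let (A_i)_{i∈ι} be a net of bounded operators on H such that each A_i is positive, the net is increasing (for i ≤ j, the operator A_j − A_i is positive), and the net has a positive upper bound B (for all i, B − A_i is positive). Then the net has a least upper bound A among bounded operators: A − A_i is positive for all i, any bounded operator C with C − A_i positive for all i satisfies that C − A is positive, and moreover the net converges strongly to A, i.e. for every v ∈ H the net (A_i v)_{i∈ι} converges to A v in the norm of H (convergence along the atTop filter on ι). -/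
open scoped InnerProductSpace Topology
open Filter RCLike ContinuousLinearMap

section Aux

variable {𝕜 E : Type*} [RCLike 𝕜] [NormedAddCommGroup E] [InnerProductSpace 𝕜 E]
  [CompleteSpace E]

local notation "⟪" x ", " y "⟫" => @inner 𝕜 _ _ x y

lemma sq_norm_apply_le_pos (D : E →L[𝕜] E) (hD : D.IsPositive) (x : E) :
    ‖D x‖ ^ 2 ≤ ‖D‖ * re ⟪D x, x⟫ := by
  rcases eq_or_lt_of_le (norm_nonneg D) with h0 | h0
  · have : D = 0 := by rw [← norm_le_zero_iff, ← h0]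
    simp [this]
  set t : ℝ := ‖D‖⁻¹ with ht
  have htpos : 0 < t := inv_pos.mpr h0
  set y : E := x - (t : 𝕜) • D x with hy
  have h1 : 0 ≤ re ⟪D y, y⟫ := hD.re_inner_nonneg_left y
  have hsym := hD.1
  have hDD : ⟪D (D x), x⟫ = ⟪D x, D x⟫ := hsym (D x) x
  have hexp : re ⟪D y, y⟫
      = re ⟪D x, x⟫ - 2 * t * ‖D x‖ ^ 2 + t ^ 2 * re ⟪D (D x), D x⟫ := by
    have expand : ⟪D y, y⟫ = ⟪D x, x⟫ - (t : 𝕜) * ⟪D x, D x⟫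
        - (t : 𝕜) * ⟪D x, D x⟫ + ((t ^ 2 : ℝ) : 𝕜) * ⟪D (D x), D x⟫ := by
      simp only [hy, map_sub, map_smul, inner_sub_left, inner_sub_right,
        inner_smul_left, inner_smul_right, hDD, RCLike.conj_ofReal, RCLike.ofReal_pow]
      ring
    rw [expand]
    simp only [map_sub, map_add, RCLike.re_ofReal_mul, inner_self_eq_norm_sq]
    ring
  have h2 : re ⟪D (D x), D x⟫ ≤ ‖D‖ * ‖D x‖ ^ 2 := by
    calc re ⟪D (D x), D x⟫ ≤ ‖D (D x)‖ * ‖D x‖ := re_inner_le_norm _ _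
    _ ≤ (‖D‖ * ‖D x‖) * ‖D x‖ := by gcongr; exact D.le_opNorm _
    _ = ‖D‖ * ‖D x‖ ^ 2 := by ring
  have h3 : 0 ≤ re ⟪D x, x⟫ - 2 * t * ‖D x‖ ^ 2 + t ^ 2 * (‖D‖ * ‖D x‖ ^ 2) := by
    nlinarith [hexp ▸ h1]
  have ht2 : t ^ 2 * ‖D‖ = t := by
    rw [ht, sq, mul_assoc, inv_mul_cancel₀ (ne_of_gt h0), mul_one]
  have h5 : t * ‖D x‖ ^ 2 ≤ re ⟪D x, x⟫ := by nlinarith [h3, ht2]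
  have htD : ‖D‖ * t = 1 := mul_inv_cancel₀ (ne_of_gt h0)
  calc ‖D x‖ ^ 2 = ‖D‖ * (t * ‖D x‖ ^ 2) := by rw [← mul_assoc, htD, one_mul]
  _ ≤ ‖D‖ * re ⟪D x, x⟫ := mul_le_mul_of_nonneg_left h5 h0.le

lemma norm_le_of_le_pos {P Q : E →L[𝕜] E} (hP : P.IsPositive)
    (hPQ : (Q - P).IsPositive) : ‖P‖ ≤ ‖Q‖ := by
  have hb : ∀ x : E, ‖P x‖ ^ 2 ≤ (‖P‖ * ‖Q‖) * ‖x‖ ^ 2 := by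
    intro x
    have h1 := sq_norm_apply_le_pos P hP x
    have h2 : re ⟪P x, x⟫ ≤ re ⟪Q x, x⟫ := by
      have := hPQ.2 x
      simp only [reApplyInnerSelf_apply, sub_apply, inner_sub_left, map_sub] at this
      linarith
    have h3 : re ⟪Q x, x⟫ ≤ ‖Q‖ * ‖x‖ ^ 2 := by
      calc re ⟪Q x, x⟫ ≤ ‖Q x‖ * ‖x‖ := re_inner_le_norm _ _
      _ ≤ (‖Q‖ * ‖x‖) * ‖x‖ := by gcongr; exact Q.le_opNorm _
      _ = ‖Q‖ * ‖x‖ ^ 2 := by ring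
    nlinarith [norm_nonneg P, norm_nonneg (P x)]
  have hop : ‖P‖ ≤ Real.sqrt (‖P‖ * ‖Q‖) := by
    refine P.opNorm_le_bound (Real.sqrt_nonneg _) fun x => ?_
    have h4 : ‖P x‖ ≤ Real.sqrt ((‖P‖ * ‖Q‖) * ‖x‖ ^ 2) := by
      rw [← Real.sqrt_sq (norm_nonneg (P x))]
      exact Real.sqrt_le_sqrt (hb x)
    rwa [Real.sqrt_mul (mul_nonneg (norm_nonneg P) (norm_nonneg Q)),
      Real.sqrt_sq (norm_nonneg x)] at h4
  have hsq : ‖P‖ ^ 2 ≤ ‖P‖ * ‖Q‖ := by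
    have := Real.sq_sqrt (mul_nonneg (norm_nonneg P) (norm_nonneg Q))
    nlinarith [norm_nonneg P, hop]
  rcases eq_or_lt_of_le (norm_nonneg P) with h | h
  · rw [← h]; exact norm_nonneg Q
  · nlinarith

end Aux

/-- Let `H` be a complex Hilbert space and `ι` a nonempty directed
preorder.  Let `(A i)_{i ∈ ι}` be an increasing net of positive bounded operators on `H`
with a positive upper bound `B`.  Then the net has a least upper bound `T` among bounded
operators, and the net converges strongly to `T`. -/
theorem increasing_net_of_positive_operators_strong_limit
    {H : Type*} [NormedAddCommGroup H] [InnerProductSpace ℂ H] [CompleteSpace H]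
    {ι : Type*} [Preorder ι] [Nonempty ι] [IsDirected ι (· ≤ ·)]
    (A : ι → H →L[ℂ] H)
    (hpos : ∀ i, (A i).IsPositive)
    (hmono : ∀ i j, i ≤ j → (A j - A i).IsPositive)
    (B : H →L[ℂ] H) (hBpos : B.IsPositive)
    (hB : ∀ i, (B - A i).IsPositive) :
    ∃ T : H →L[ℂ] H,
      (∀ i, (T - A i).IsPositive) ∧
      (∀ C : H →L[ℂ] H, (∀ i, (C - A i).IsPositive) → (C - T).IsPositive) ∧
      ∀ v : H, Filter.Tendsto (fun i => A i v) Filter.atTop (nhds (T v)) := by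
  classical
  have hr_mono : ∀ (v : H) (i j : ι), i ≤ j →
      re ⟪A i v, v⟫_ℂ ≤ re ⟪A j v, v⟫_ℂ := by
    intro v i j hij
    have := (hmono i j hij).2 v
    simp only [reApplyInnerSelf_apply, sub_apply, inner_sub_left, map_sub] at this
    linarith
  have hr_bdd : ∀ (v : H) (i : ι), re ⟪A i v, v⟫_ℂ ≤ re ⟪B v, v⟫_ℂ := by
    intro v i
    have := (hB i).2 v
    simp only [reApplyInnerSelf_apply, sub_apply, inner_sub_left, map_sub] at this
    linarith
  have hAnorm : ∀ i, ‖A i‖ ≤ ‖B‖ := fun i => norm_le_of_le_pos (hpos i) (hB i)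
  have key : ∀ (v : H) (i j : ι), i ≤ j →
      ‖A j v - A i v‖ ^ 2 ≤ ‖B‖ * (re ⟪A j v, v⟫_ℂ - re ⟪A i v, v⟫_ℂ) := by
    intro v i j hij
    have hD := hmono i j hij
    have hDB : (B - (A j - A i)).IsPositive := by
      have hEq : B - (A j - A i) = (B - A j) + A i := by abel
      rw [hEq]; exact (hB j).add (hpos i)
    have h1 := sq_norm_apply_le_pos (A j - A i) hD v
    have h2 : ‖A j - A i‖ ≤ ‖B‖ := norm_le_of_le_pos hD hDB
    have h3 : re ⟪(A j - A i) v, v⟫_ℂ = re ⟪A j v, v⟫_ℂ - re ⟪A i v, v⟫_ℂ := by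
      simp [sub_apply, inner_sub_left]
    have h4 : 0 ≤ re ⟪(A j - A i) v, v⟫_ℂ := hD.re_inner_nonneg_left v
    calc ‖A j v - A i v‖ ^ 2 = ‖(A j - A i) v‖ ^ 2 := by rw [sub_apply]
    _ ≤ ‖A j - A i‖ * re ⟪(A j - A i) v, v⟫_ℂ := h1
    _ ≤ ‖B‖ * re ⟪(A j - A i) v, v⟫_ℂ := mul_le_mul_of_nonneg_right h2 h4
    _ = ‖B‖ * (re ⟪A j v, v⟫_ℂ - re ⟪A i v, v⟫_ℂ) := by rw [h3]
  have hconv : ∀ v : H, ∃ w : H, Tendsto (fun i => A i v) atTop (𝓝 w) := by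
    intro v
    refine cauchySeq_tendsto_of_complete ?_
    rw [CauchySeq, Metric.cauchy_iff]
    refine ⟨Filter.map_neBot, ?_⟩
    intro ε hε
    set r : ι → ℝ := fun i => re ⟪A i v, v⟫_ℂ with hr
    have hbdd : BddAbove (Set.range r) := by
      refine ⟨re ⟪B v, v⟫_ℂ, ?_⟩
      rintro _ ⟨i, rfl⟩
      exact hr_bdd v i
    set S := ⨆ i, r i with hS
    have hle : ∀ i, r i ≤ S := fun i => le_ciSup hbdd i
    have hBnn : (0:ℝ) ≤ ‖B‖ := norm_nonneg B
    set δ : ℝ := (ε / 2) ^ 2 / (‖B‖ + 1) with hδ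
    have hδpos : 0 < δ := by positivity
    obtain ⟨i₀, hi₀⟩ : ∃ i₀, S - δ < r i₀ :=
      exists_lt_of_lt_ciSup (show S - δ < S by linarith [hle (Classical.arbitrary ι)])
    have half : ∀ k m : ι, i₀ ≤ k → k ≤ m → ‖A m v - A k v‖ < ε / 2 := by
      intro k m hk hkm
      have h1 := key v k m hkm
      have h2 : r i₀ ≤ r k := hr_mono v i₀ k hk
      have h3 : ‖A m v - A k v‖ ^ 2 < (ε / 2) ^ 2 := by
        have hδeq : (‖B‖ + 1) * δ = (ε / 2) ^ 2 := by
          rw [hδ]; field_simp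
        nlinarith [h1, hle m, h2, hi₀, hδpos, hBnn]
      exact lt_of_pow_lt_pow_left₀ 2 (by positivity) h3
    refine ⟨(fun i => A i v) '' Set.Ici i₀, image_mem_map (Ici_mem_atTop i₀), ?_⟩
    rintro _ ⟨k, hk, rfl⟩ _ ⟨l, hl, rfl⟩
    obtain ⟨m, hkm, hlm⟩ := exists_ge_ge k l
    have d1 : dist (A k v) (A m v) < ε / 2 := by
      rw [dist_eq_norm, norm_sub_rev]; exact half k m hk hkm
    have d2 : dist (A m v) (A l v) < ε / 2 := by
      rw [dist_eq_norm]; exact half l m hl hlm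
    calc dist (A k v) (A l v) ≤ dist (A k v) (A m v) + dist (A m v) (A l v) :=
      dist_triangle _ _ _
    _ < ε / 2 + ε / 2 := add_lt_add d1 d2
    _ = ε := by ring
  choose Tf hTf using hconv
  have hadd : ∀ v w : H, Tf (v + w) = Tf v + Tf w := by
    intro v w
    refine tendsto_nhds_unique (hTf (v + w)) ?_
    have := (hTf v).add (hTf w)
    simpa using this
  have hsmul : ∀ (c : ℂ) (v : H), Tf (c • v) = c • Tf v := by
    intro c v
    refine tendsto_nhds_unique (hTf (c • v)) ?_
    have := (hTf v).const_smul c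
    simpa using this
  have hbound : ∀ v : H, ‖Tf v‖ ≤ ‖B‖ * ‖v‖ := by
    intro v
    refine le_of_tendsto (hTf v).norm (Eventually.of_forall fun i => ?_)
    calc ‖A i v‖ ≤ ‖A i‖ * ‖v‖ := (A i).le_opNorm v
    _ ≤ ‖B‖ * ‖v‖ := mul_le_mul_of_nonneg_right (hAnorm i) (norm_nonneg v)
  set T : H →L[ℂ] H := LinearMap.mkContinuous
    { toFun := Tf, map_add' := hadd, map_smul' := hsmul } ‖B‖ hbound with hT
  have hTapp : ∀ v : H, T v = Tf v := fun v => rfl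
  have hTtendsto : ∀ v : H, Tendsto (fun i => A i v) atTop (𝓝 (T v)) := by
    intro v; rw [hTapp]; exact hTf v
  have hinner : ∀ v w : H, Tendsto (fun i => ⟪A i v, w⟫_ℂ) atTop (𝓝 ⟪T v, w⟫_ℂ) :=
    fun v w => (hTtendsto v).inner tendsto_const_nhds
  have hre : ∀ v : H, Tendsto (fun i => re ⟪A i v, v⟫_ℂ) atTop (𝓝 (re ⟪T v, v⟫_ℂ)) := by
    intro v
    exact (RCLike.continuous_re.tendsto _).comp (hinner v v)
  have hTsa : IsSelfAdjoint T := by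
    rw [isSelfAdjoint_iff_isSymmetric]
    intro x y
    have h1 : Tendsto (fun i => ⟪A i x, y⟫_ℂ) atTop (𝓝 ⟪T x, y⟫_ℂ) := hinner x y
    have h2 : Tendsto (fun i => ⟪A i x, y⟫_ℂ) atTop (𝓝 ⟪x, T y⟫_ℂ) := by
      have h3 : Tendsto (fun i => ⟪x, A i y⟫_ℂ) atTop (𝓝 ⟪x, T y⟫_ℂ) :=
        tendsto_const_nhds.inner (hTtendsto y)
      refine h3.congr fun i => ?_
      exact ((hpos i).1 x y).symm
    exact tendsto_nhds_unique h1 h2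
  refine ⟨T, fun i => ?_, fun C hC => ?_, hTtendsto⟩
  · refine ⟨(hTsa.sub (hpos i).isSelfAdjoint).isSymmetric, fun v => ?_⟩
    have h1 : re ⟪A i v, v⟫_ℂ ≤ re ⟪T v, v⟫_ℂ :=
      ge_of_tendsto (hre v) (eventually_atTop.2 ⟨i, fun j hj => hr_mono v i j hj⟩)
    simp only [reApplyInnerSelf_apply, sub_apply, inner_sub_left, map_sub]
    linarith
  · have hCsa : IsSelfAdjoint C := by
      have i₀ : ι := Classical.arbitrary ι
      have hEq : C = (C - A i₀) + A i₀ := by abel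
      rw [hEq]
      exact (hC i₀).isSelfAdjoint.add (hpos i₀).isSelfAdjoint
    refine ⟨(hCsa.sub hTsa).isSymmetric, fun v => ?_⟩
    have h1 : re ⟪T v, v⟫_ℂ ≤ re ⟪C v, v⟫_ℂ := by
      refine le_of_tendsto (hre v) (Eventually.of_forall fun i => ?_)
      have := (hC i).2 v
      simp only [reApplyInnerSelf_apply, sub_apply, inner_sub_left, map_sub] at this
      linarith
    simp only [reApplyInnerSelf_apply, sub_apply, inner_sub_left, map_sub]
    linarith
end
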